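/- Let x* be a strict Nash equilibrium of a finite N-player game, let a > 0 and M > 0 be such that v_{i s*_i}(x) − v_{i s_i}(x) ≥ a for all x ∈ U_M, all s_i ≠ s*_i and all i. If the HEDGE algorithm with perfect mixed payoff observations is run with a constant step-size γ_t = γ > 0 and initialized in U_M, then ‖x(t) − x*‖ = O(e^{−aγt}), i.e. there exists C > 0 with ‖x(t) − x*‖ ≤ C e^{−aγt} for all t. -/

import Mathlib

open Real Finset Filter Topology

noncomputable section

/-- Payoff to player `i` of pure strategy `b` against the mixed profile `x` of the
other players. -/
def purePay {N : ℕ} (S : Fin N → Type*) [∀ i, Fintype (S i)] [∀ i, DecidableEq (S i)]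
    (u : ∀ _ : Fin N, (∀ j, S j) → ℝ) (i : Fin N) (b : S i) (x : ∀ j, S j → ℝ) : ℝ :=
  ∑ s : ∀ j, S j, if s i = b then u i s * ∏ j ∈ univ.erase i, x j (s j) else 0

/-- The logit (exponential weights) map. -/
def logit {α : Type*} [Fintype α] (y : α → ℝ) : α → ℝ :=
  fun a => Real.exp (y a) / ∑ b, Real.exp (y b)

/-- `U_M = { x = Λ(y) : y_{i s_i} − y_{i s*_i} ≤ −M for all s_i ≠ s*_i, all i }`. -/
def inUM {N : ℕ} (S : Fin N → Type*) [∀ i, Fintype (S i)]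
    (sstar : ∀ i, S i) (M : ℝ) (x : ∀ i, S i → ℝ) : Prop :=
  ∃ y : ∀ i, S i → ℝ, (∀ i, x i = logit (y i)) ∧
    ∀ i, ∀ b : S i, b ≠ sstar i → y i b - y i (sstar i) ≤ -M

lemma logit_sum_pos {α : Type*} [Fintype α] [Nonempty α] (y : α → ℝ) :
    0 < ∑ b, Real.exp (y b) :=
  Finset.sum_pos (fun b _ => Real.exp_pos _) Finset.univ_nonempty

lemma logit_pos {α : Type*} [Fintype α] (y : α → ℝ) (a : α) : 0 < logit y a := by
  have : Nonempty α := ⟨a⟩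
  exact div_pos (Real.exp_pos _) (logit_sum_pos y)

lemma logit_sum_eq_one {α : Type*} [Fintype α] [Nonempty α] (y : α → ℝ) :
    ∑ a, logit y a = 1 := by
  unfold logit
  rw [← Finset.sum_div]
  exact div_self (ne_of_gt (logit_sum_pos y))

lemma logit_diff_eq {α : Type*} [Fintype α] (y y' : α → ℝ) (h : logit y = logit y')
    (a c : α) : y a - y c = y' a - y' c := by
  have : Nonempty α := ⟨a⟩
  have hS := logit_sum_pos y
  have hS' := logit_sum_pos y'
  have ha' := congrFun h a
  have hc' := congrFun h c
  unfold logit at ha' hc'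
  rw [div_eq_div_iff (ne_of_gt hS) (ne_of_gt hS')] at ha' hc'
  have hkey : Real.exp (y a) * Real.exp (y' c) = Real.exp (y' a) * Real.exp (y c) := by
    nlinarith [Real.exp_pos (y a), Real.exp_pos (y' a), Real.exp_pos (y c),
      Real.exp_pos (y' c), hS, hS']
  rw [← Real.exp_add, ← Real.exp_add] at hkey
  have := Real.exp_injective hkey
  linarith

lemma logit_le_exp_diff {α : Type*} [Fintype α] (y : α → ℝ) (a c : α) :
    logit y a ≤ Real.exp (y a - y c) := by
  have : Nonempty α := ⟨a⟩
  rw [Real.exp_sub]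
  apply div_le_div_of_nonneg_left (le_of_lt (Real.exp_pos _)) (Real.exp_pos _)
  exact Finset.single_le_sum (fun b _ => le_of_lt (Real.exp_pos (y b))) (Finset.mem_univ c)

/-- Deterministic HEDGE with a constant step-size `γ`, started in `U_M` near a strict
equilibrium, satisfies `‖x(t) − x*‖ = O(e^{−aγt})`. -/
theorem hedge_perfect_info_constant_step_rate
    {N : ℕ} (S : Fin N → Type*) [∀ i, Fintype (S i)] [∀ i, DecidableEq (S i)]
    (u : ∀ _ : Fin N, (∀ j, S j) → ℝ)
    (sstar : ∀ i, S i)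
    (hstrict : ∀ i, ∀ b : S i, b ≠ sstar i →
      u i (Function.update sstar i b) < u i sstar)
    (a M γ : ℝ) (ha : 0 < a) (hM : 0 < M) (hγ : 0 < γ)
    (hgap : ∀ x : ∀ i, S i → ℝ, inUM S sstar M x →
      ∀ i, ∀ b : S i, b ≠ sstar i →
        purePay S u i (sstar i) x - purePay S u i b x ≥ a)
    (y : ℕ → ∀ i, S i → ℝ) (x : ℕ → ∀ i, S i → ℝ)
    (hx : ∀ t, 1 ≤ t → ∀ i, x t i = logit (y t i))
    (hrec : ∀ t, 1 ≤ t → ∀ i, ∀ b : S i,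
      y (t + 1) i b = y t i b + γ * purePay S u i b (x t))
    (hinit : inUM S sstar M (x 1)) :
    ∃ C : ℝ, 0 < C ∧ ∀ t : ℕ, 1 ≤ t →
      ∑ i, ∑ b, |x t i b - (if b = sstar i then 1 else 0)| ≤
        C * Real.exp (-(a * γ * t)) := by
  -- Step 1: margins at time 1 for the actual y
  obtain ⟨y0, hy0x, hy0⟩ := hinit
  have hx1 : ∀ i, x 1 i = logit (y 1 i) := hx 1 le_rfl
  have hd1 : ∀ i, ∀ b : S i, b ≠ sstar i → y 1 i b - y 1 i (sstar i) ≤ -M := by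
    intro i b hb
    have heq : logit (y 1 i) = logit (y0 i) := by rw [← hx1 i, hy0x i]
    rw [logit_diff_eq (y 1 i) (y0 i) heq b (sstar i)]
    exact hy0 i b hb
  -- Step 2: margins improve linearly
  have key : ∀ n : ℕ, ∀ i, ∀ b : S i, b ≠ sstar i →
      y (n + 1) i b - y (n + 1) i (sstar i) ≤ -(M + a * γ * n) := by
    intro n
    induction n with
    | zero => simpa using hd1
    | succ n ih =>
      have hUM : inUM S sstar M (x (n + 1)) := by
        refine ⟨y (n + 1), hx (n + 1) (by omega), fun i b hb => ?_⟩
        have h1 := ih i b hb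
        have h2 : 0 ≤ a * γ * n := by positivity
        linarith
      intro i b hb
      rw [hrec (n + 1) (by omega) i b, hrec (n + 1) (by omega) i (sstar i)]
      have hg := hgap (x (n + 1)) hUM i b hb
      have h1 := ih i b hb
      push_cast
      nlinarith
  -- Step 3: conclusion
  set C0 : ℝ := 2 * (∑ i, (Fintype.card (S i) : ℝ)) * Real.exp (a * γ - M) with hC0
  have hC0nn : 0 ≤ C0 := by positivity
  refine ⟨C0 + 1, by positivity, ?_⟩
  intro t ht
  obtain ⟨n, rfl⟩ : ∃ n, t = n + 1 := ⟨t - 1, by omega⟩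
  have hxt : ∀ i, x (n + 1) i = logit (y (n + 1) i) := hx (n + 1) (by omega)
  set E : ℝ := Real.exp (-(M + a * γ * n)) with hE
  have hper : ∀ i, ∑ b, |x (n + 1) i b - (if b = sstar i then 1 else 0)| ≤
      2 * (Fintype.card (S i) : ℝ) * E := by
    intro i
    have hne : Nonempty (S i) := ⟨sstar i⟩
    have hxb : ∀ b : S i, b ≠ sstar i → x (n + 1) i b ≤ E := by
      intro b hb
      rw [hxt i]
      calc logit (y (n + 1) i) b ≤ Real.exp (y (n + 1) i b - y (n + 1) i (sstar i)) :=
            logit_le_exp_diff _ b (sstar i)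
        _ ≤ E := Real.exp_le_exp.mpr (key n i b hb)
    have hxpos : ∀ b : S i, 0 < x (n + 1) i b := by
      intro b; rw [hxt i]; exact logit_pos _ b
    have hsum1 : ∑ b, x (n + 1) i b = 1 := by
      rw [hxt i]; exact logit_sum_eq_one _
    have hsplit : ∑ b, |x (n + 1) i b - (if b = sstar i then 1 else 0)| =
        |x (n + 1) i (sstar i) - 1| + ∑ b ∈ univ.erase (sstar i), x (n + 1) i b := by
      rw [← Finset.add_sum_erase _ _ (Finset.mem_univ (sstar i))]
      simp only [if_pos rfl]
      congr 1
      apply Finset.sum_congr rfl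
      intro b hb
      rw [if_neg (Finset.ne_of_mem_erase hb), sub_zero, abs_of_pos (hxpos b)]
    have hrest : ∑ b ∈ univ.erase (sstar i), x (n + 1) i b = 1 - x (n + 1) i (sstar i) := by
      have := Finset.add_sum_erase univ (x (n + 1) i) (Finset.mem_univ (sstar i))
      rw [hsum1] at this
      linarith
    have hle1 : x (n + 1) i (sstar i) ≤ 1 := by
      rw [← hsum1]
      exact Finset.single_le_sum (fun b _ => le_of_lt (hxpos b)) (Finset.mem_univ _)
    have habs : |x (n + 1) i (sstar i) - 1| = 1 - x (n + 1) i (sstar i) := by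
      rw [abs_sub_comm, abs_of_nonneg (by linarith)]
    have hrestE : ∑ b ∈ univ.erase (sstar i), x (n + 1) i b ≤
        (Fintype.card (S i) : ℝ) * E := by
      calc ∑ b ∈ univ.erase (sstar i), x (n + 1) i b ≤
          ∑ _b ∈ univ.erase (sstar i), E := by
            apply Finset.sum_le_sum
            intro b hb
            exact hxb b (Finset.ne_of_mem_erase hb)
        _ = ((univ.erase (sstar i)).card : ℝ) * E := by rw [Finset.sum_const, nsmul_eq_mul]
        _ ≤ (Fintype.card (S i) : ℝ) * E := by
            apply mul_le_mul_of_nonneg_right _ (le_of_lt (Real.exp_pos _))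
            exact_mod_cast Finset.card_le_card (Finset.erase_subset _ _)
    rw [hsplit, habs, hrest]
    linarith
  calc ∑ i, ∑ b, |x (n + 1) i b - (if b = sstar i then 1 else 0)| ≤
      ∑ i, 2 * (Fintype.card (S i) : ℝ) * E := Finset.sum_le_sum fun i _ => hper i
    _ = C0 * Real.exp (-(a * γ * (n + 1))) := by
        have hEE : Real.exp (a * γ - M) * Real.exp (-(a * γ * ((n : ℝ) + 1))) = E := by
          rw [hE, ← Real.exp_add]; congr 1; ring
        rw [hC0, ← Finset.sum_mul, ← Finset.mul_sum]
        push_cast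
        linear_combination (-(2 * ∑ i, ((Fintype.card (S i)) : ℝ))) * hEE
    _ ≤ (C0 + 1) * Real.exp (-(a * γ * ((n + 1 : ℕ) : ℝ))) := by
        push_cast
        have := Real.exp_pos (-(a * γ * ((n : ℝ) + 1)))
        nlinarith
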